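/- Let μ be a nonzero finite positive measure on Ω and (f_n) a uniformly bounded sequence in L^∞(μ). If for all disjoint compact sets A, B ⊆ ℂ one has lim_{n→∞} μ(f_n^{-1}(A)) · μ(f_n^{-1}(B)) = 0, then every subsequence of (f_n) has a subsequence converging in L^1(μ) norm to a constant function. -/

import Mathlib

open MeasureTheory Filter Set
open Metric Topology

theorem key_lemma {Ω : Type*} [MeasurableSpace Ω] (μ : Measure Ω) [IsFiniteMeasure μ]
    (hμ : μ ≠ 0) (f : ℕ → Ω → ℂ)
    (C : ℝ) (hC : 0 ≤ C) (hbd : ∀ n x, ‖f n x‖ ≤ C)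
    (hprod : ∀ A B : Set ℂ, IsCompact A → IsCompact B → Disjoint A B →
      Tendsto (fun n => (μ (f n ⁻¹' A)).toReal * (μ (f n ⁻¹' B)).toReal)
        atTop (nhds 0)) (ε δ : ℝ) (hε : 0 < ε) (hδ : 0 < δ) :
    ∀ᶠ n in atTop, ∃ c : ℂ, ‖c‖ ≤ C ∧ (μ {x | ε ≤ dist (f n x) c}).toReal < δ := by
  obtain ⟨t, hts, htf, htc⟩ := Metric.finite_approx_of_totallyBounded
    (isCompact_closedBall (0:ℂ) C).totallyBounded (ε/2) (by linarith)
  have hM : 0 < (μ Set.univ).toReal := by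
    refine ENNReal.toReal_pos ?_ (measure_ne_top μ _)
    simpa [Measure.measure_univ_eq_zero] using hμ
  -- t is nonempty
  have h0t : (0:ℂ) ∈ closedBall (0:ℂ) C := by simpa using hC
  obtain ⟨y0, hy0t, -⟩ := mem_iUnion₂.mp (htc h0t)
  have hcard : 0 < (htf.toFinset.card : ℝ) := by
    have : y0 ∈ htf.toFinset := htf.mem_toFinset.mpr hy0t
    exact_mod_cast Finset.card_pos.mpr ⟨y0, this⟩
  set a : ℝ := (μ Set.univ).toReal / htf.toFinset.card with ha_def
  have ha : 0 < a := div_pos hM hcard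
  -- for each center, the product hypothesis
  have hev : ∀ᶠ n in atTop, ∀ y ∈ t,
      (μ (f n ⁻¹' closedBall y (ε/2))).toReal *
        (μ (f n ⁻¹' (closedBall (0:ℂ) (C+1) ∩ {z | ε ≤ dist z y}))).toReal < a * δ := by
    rw [eventually_all_finite htf]
    intro y _
    have hB : IsCompact (closedBall (0:ℂ) (C+1) ∩ {z | ε ≤ dist z y}) :=
      (isCompact_closedBall _ _).inter_right
        (isClosed_le continuous_const (continuous_id.dist continuous_const))
    have hd : Disjoint (closedBall y (ε/2)) (closedBall (0:ℂ) (C+1) ∩ {z | ε ≤ dist z y}) := by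
      rw [Set.disjoint_left]
      rintro z hz ⟨-, hz2⟩
      rw [mem_closedBall] at hz
      simp only [mem_setOf_eq] at hz2
      linarith
    have := hprod _ _ (isCompact_closedBall _ _) hB hd
    exact this.eventually_lt_const (by positivity)
  filter_upwards [hev] with n hn
  -- pigeonhole: some ball has large measure
  have hcover : (μ Set.univ).toReal ≤
      ∑ y ∈ htf.toFinset, (μ (f n ⁻¹' closedBall y (ε/2))).toReal := by
    rw [← ENNReal.toReal_sum (fun y _ => measure_ne_top μ _)]
    refine ENNReal.toReal_le_toReal (measure_ne_top μ _)
      (by exact (ENNReal.sum_lt_top.mpr (fun y _ => (measure_ne_top μ _).lt_top)).ne) |>.mpr ?_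
    calc μ Set.univ ≤ μ (⋃ y ∈ htf.toFinset, f n ⁻¹' closedBall y (ε/2)) := by
          refine measure_mono fun x _ => ?_
          have hx : f n x ∈ closedBall (0:ℂ) C := by
            simpa [mem_closedBall, dist_zero_right] using hbd n x
          obtain ⟨y, hy, hxy⟩ := mem_iUnion₂.mp (htc hx)
          exact mem_iUnion₂.mpr ⟨y, htf.mem_toFinset.mpr hy, ball_subset_closedBall hxy⟩
      _ ≤ ∑ y ∈ htf.toFinset, μ (f n ⁻¹' closedBall y (ε/2)) := measure_biUnion_finset_le _ _
  have hex : ∃ y ∈ htf.toFinset, a ≤ (μ (f n ⁻¹' closedBall y (ε/2))).toReal := by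
    by_contra h
    push_neg at h
    have hsum : ∑ y ∈ htf.toFinset, (μ (f n ⁻¹' closedBall y (ε/2))).toReal <
        ∑ _y ∈ htf.toFinset, a :=
      Finset.sum_lt_sum_of_nonempty (Finset.card_pos.mp (by exact_mod_cast hcard)) h
    rw [Finset.sum_const, nsmul_eq_mul, ha_def, mul_div_cancel₀ _ (ne_of_gt hcard)] at hsum
    linarith
  obtain ⟨y, hyt, hy⟩ := hex
  refine ⟨y, ?_, ?_⟩
  · have := hts (htf.mem_toFinset.mp hyt)
    simpa [mem_closedBall, dist_zero_right] using this
  · have hprodlt := hn y (htf.mem_toFinset.mp hyt)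
    have hb : (μ (f n ⁻¹' (closedBall (0:ℂ) (C+1) ∩ {z | ε ≤ dist z y}))).toReal < δ := by
      by_contra h
      push_neg at h
      nlinarith [ENNReal.toReal_nonneg (a := μ (f n ⁻¹' (closedBall (0:ℂ) (C+1) ∩ {z | ε ≤ dist z y})))]
    refine lt_of_le_of_lt ?_ hb
    refine ENNReal.toReal_le_toReal (measure_ne_top μ _) (measure_ne_top μ _) |>.mpr ?_
    refine measure_mono fun x hx => ?_
    simp only [mem_setOf_eq] at hx
    refine ⟨?_, hx⟩
    simp only [mem_closedBall, dist_zero_right]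
    linarith [hbd n x]

/-- If for all disjoint compact sets `A, B ⊆ ℂ` the product `μ(f n ⁻¹ A) · μ(f n ⁻¹ B)` tends
to `0`, then every subsequence of the uniformly bounded sequence `(f n)` has a further
subsequence converging in `L¹(μ)` norm to a constant function. -/
theorem stmt1 {Ω : Type*} [MeasurableSpace Ω] (μ : Measure Ω) [IsFiniteMeasure μ]
    (hμ : μ ≠ 0) (f : ℕ → Ω → ℂ) (hmeas : ∀ n, Measurable (f n))
    (C : ℝ) (hbd : ∀ n x, ‖f n x‖ ≤ C)
    (hprod : ∀ A B : Set ℂ, IsCompact A → IsCompact B → Disjoint A B →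
      Tendsto (fun n => (μ (f n ⁻¹' A)).toReal * (μ (f n ⁻¹' B)).toReal)
        atTop (nhds 0)) :
    ∀ φ : ℕ → ℕ, StrictMono φ →
      ∃ c : ℂ, ∃ ψ : ℕ → ℕ, StrictMono ψ ∧
        Tendsto (fun k => ∫ x, ‖f (φ (ψ k)) x - c‖ ∂μ) atTop (nhds 0) := by
  intro φ hφ
  set C' : ℝ := max C 0 with hC'def
  have hC' : 0 ≤ C' := le_max_right _ _
  have hbd' : ∀ n x, ‖f n x‖ ≤ C' := fun n x => (hbd n x).trans (le_max_left _ _)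
  have key := key_lemma μ hμ f C' hC' hbd' hprod
  have hk : ∀ k : ℕ, ∀ᶠ m in atTop, ∃ c : ℂ, ‖c‖ ≤ C' ∧
      (μ {x | 1/(k+1:ℝ) ≤ dist (f (φ m) x) c}).toReal < 1/(k+1:ℝ) := by
    intro k
    have hpos : (0:ℝ) < 1/(k+1:ℝ) := by positivity
    exact hφ.tendsto_atTop.eventually (key (1/(k+1:ℝ)) (1/(k+1:ℝ)) hpos hpos)
  obtain ⟨θ, hθ, hθP⟩ := Filter.extraction_forall_of_eventually hk
  choose c hc hcμ using hθP
  obtain ⟨L, hL, σ, hσ, hcL⟩ := tendsto_subseq_of_bounded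
    (isBounded_closedBall (x := (0:ℂ)) (r := C'))
    (fun k => by simpa [mem_closedBall, dist_zero_right] using hc k)
  set g : ℕ → Ω → ℂ := fun k => f (φ (θ (σ k))) with hg
  -- convergence in measure to the constant L
  have htm : TendstoInMeasure μ g atTop (fun _ => L) := by
    rw [tendstoInMeasure_iff_dist]
    intro ε hε
    have h1 : Tendsto (fun k : ℕ => ENNReal.ofReal (1/(σ k + 1 : ℝ))) atTop (𝓝 0) := by
      rw [← ENNReal.ofReal_zero]
      apply ENNReal.tendsto_ofReal
      exact tendsto_one_div_add_atTop_nhds_zero_nat.comp hσ.tendsto_atTop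
    refine tendsto_of_tendsto_of_tendsto_of_le_of_le' tendsto_const_nhds h1
      (Eventually.of_forall fun k => zero_le) ?_
    have hev1 : ∀ᶠ k in atTop, dist (c (σ k)) L < ε/2 := by
      have := Metric.tendsto_nhds.mp hcL (ε/2) (by linarith)
      simpa using this
    have hev2 : ∀ᶠ k in atTop, 1/(σ k + 1 : ℝ) < ε/2 := by
      have h := (tendsto_one_div_add_atTop_nhds_zero_nat (𝕜 := ℝ)).comp hσ.tendsto_atTop
      exact h.eventually_lt_const (by linarith)
    filter_upwards [hev1, hev2] with k h1k h2k
    have hsub : {x | ε ≤ dist (g k x) L} ⊆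
        {x | 1/(σ k + 1:ℝ) ≤ dist (g k x) (c (σ k))} := by
      intro x hx
      simp only [mem_setOf_eq] at hx ⊢
      have htri : dist (g k x) L ≤ dist (g k x) (c (σ k)) + dist (c (σ k)) L :=
        dist_triangle _ _ _
      linarith
    calc μ {x | ε ≤ dist (g k x) L} ≤ μ {x | 1/(σ k + 1:ℝ) ≤ dist (g k x) (c (σ k))} :=
          measure_mono hsub
      _ ≤ ENNReal.ofReal (1/(σ k + 1 : ℝ)) := by
          rw [← ENNReal.ofReal_toReal (measure_ne_top μ _)]
          exact ENNReal.ofReal_le_ofReal (hcμ (σ k)).le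
  obtain ⟨ns, hns, hae⟩ := htm.exists_seq_tendsto_ae
  refine ⟨L, fun j => θ (σ (ns j)), hθ.comp (hσ.comp hns), ?_⟩
  have hL' : ‖L‖ ≤ C' := by
    rw [closure_closedBall] at hL
    simpa [mem_closedBall, dist_zero_right] using hL
  have hzero : (0:ℝ) = ∫ _x, (0:ℝ) ∂μ := by simp
  rw [hzero]
  refine tendsto_integral_of_dominated_convergence (fun _ => 2*C') ?_ ?_ ?_ ?_
  · intro j
    exact ((hmeas _).sub measurable_const).norm.aestronglyMeasurable
  · exact integrable_const _
  · intro j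
    refine Eventually.of_forall fun x => ?_
    have : ‖f (φ (θ (σ (ns j)))) x - L‖ ≤ ‖f (φ (θ (σ (ns j)))) x‖ + ‖L‖ := norm_sub_le _ _
    have h2 := hbd' (φ (θ (σ (ns j)))) x
    simp only [norm_norm]
    linarith
  · filter_upwards [hae] with x hx
    have : Tendsto (fun j => dist (g (ns j) x) L) atTop (𝓝 0) :=
      tendsto_iff_dist_tendsto_zero.mp hx
    simpa [dist_eq_norm] using this
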